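/- If (x₁,x₂) is an equilibrium of the two-node coupled system with x₁ ≠ x₂, then 2β = (f(x₁,ν) − f(x₂,ν))/(x₁ − x₂), and consequently 2β ≤ 1/3 + ν. -/
import Mathlib


/-- The single-node vector field `f(x,ν) = -(x-1)(x²-ν)`. -/
noncomputable def f (ν x : ℝ) : ℝ := -((x - 1) * (x ^ 2 - ν))

/-- `(x₁,x₂)` is an equilibrium of the two-node bidirectionally coupled system. -/
def IsEquilibrium (ν β x₁ x₂ : ℝ) : Prop :=
  f ν x₁ + β * (x₂ - x₁) = 0 ∧ f ν x₂ + β * (x₁ - x₂) = 0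

/-- If `(x₁,x₂)` is an off-diagonal equilibrium of the two-node coupled system then
`2β = (f(x₁,ν) - f(x₂,ν))/(x₁ - x₂)`, and consequently `2β ≤ 1/3 + ν`. -/
theorem offdiagonal_equilibrium_coupling_bound {ν β x₁ x₂ : ℝ}
    (heq : IsEquilibrium ν β x₁ x₂) (hne : x₁ ≠ x₂) :
    2 * β = (f ν x₁ - f ν x₂) / (x₁ - x₂) ∧ 2 * β ≤ 1 / 3 + ν := by
  obtain ⟨h1, h2⟩ := heq
  have hd : x₁ - x₂ ≠ 0 := sub_ne_zero.mpr hne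
  have key : 2 * β * (x₁ - x₂) = f ν x₁ - f ν x₂ := by linarith
  constructor
  · field_simp
    linarith
  · simp only [f] at key
    have hQ : (2 * β - (1 / 3 + ν)) * (x₁ - x₂) =
        (-(x₁ ^ 2 + x₁ * x₂ + x₂ ^ 2 - (x₁ + x₂) + 1 / 3)) * (x₁ - x₂) := by
      linear_combination key
    have h3 := mul_right_cancel₀ hd hQ
    nlinarith [sq_nonneg (x₁ - x₂), sq_nonneg (x₁ + x₂ - 2 / 3)]
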